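/- There exist two probability distributions p and q on bit strings of length n = 2^k (for suitable k, e.g. k ≥ 2) whose first and second moments (hence covariance matrices, with bits viewed as ±1-valued random vectors) coincide, yet whose total variation distance equals 1 − n·2^{1−n}. In particular, the total variation distance between two distributions on bit strings cannot be upper bounded by any function of the difference of their covariance matrices. -/

import Mathlib

open scoped BigOperators

namespace Stmt4

variable {k : ℕ}

/-- mod-2 inner product of two bit vectors -/
def ipz (a v : Fin k → Bool) : ZMod 2 := ∑ t, if a t && v t then 1 else 0

def ipb (a v : Fin k → Bool) : Bool := decide (ipz a v = 1)

def mu (b : Bool) : ℝ := if b then -1 else 1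

/-- sign character: (-1)^{⟨a,v⟩} -/
def sgn (a v : Fin k → Bool) : ℝ := mu (ipb a v)

lemma mu_xor (b c : Bool) : mu (xor b c) = mu b * mu c := by
  cases b <;> cases c <;> simp [mu]

lemma mu_sq (b : Bool) : mu b * mu b = 1 := by cases b <;> simp [mu]

lemma stmt_sign (b : Bool) : (if b then (1:ℝ) else -1) = - mu b := by
  cases b <;> simp [mu]

lemma ipz_comm (a v : Fin k → Bool) : ipz a v = ipz v a := by
  unfold ipz; congr 1; funext t; rw [Bool.and_comm]

lemma ipz_add (a a' v : Fin k → Bool) :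
    ipz (fun t => xor (a t) (a' t)) v = ipz a v + ipz a' v := by
  unfold ipz
  rw [← Finset.sum_add_distrib]
  apply Finset.sum_congr rfl
  intro t _
  cases h : a t <;> cases h' : a' t <;> cases hv : v t <;> simp [h, h', hv] <;> decide

lemma zmod2_cases : ∀ z : ZMod 2, z = 0 ∨ z = 1 := by decide

lemma sgn_mul (a a' v : Fin k → Bool) :
    sgn a v * sgn a' v = sgn (fun t => xor (a t) (a' t)) v := by
  unfold sgn ipb mu
  rcases zmod2_cases (ipz a v) with h | h <;> rcases zmod2_cases (ipz a' v) with h' | h' <;>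
    simp [ipz_add, h, h']

lemma ipz_zero (a : Fin k → Bool) : ipz a (fun _ => false) = 0 := by
  unfold ipz; simp

lemma ipz_delta (a : Fin k → Bool) (t : Fin k) :
    ipz a (fun s => decide (s = t)) = if a t then 1 else 0 := by
  unfold ipz
  rw [Finset.sum_eq_single t]
  · simp
  · intro s _ hs; simp [hs]
  · intro h; exact absurd (Finset.mem_univ t) h

end Stmt4

namespace Stmt4

lemma ipb_zero (a : Fin k → Bool) : ipb a (fun _ => false) = false := by
  simp [ipb, ipz_zero]

lemma ipz_update (a v : Fin k → Bool) (t₀ : Fin k) (h : a t₀ = true) :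
    ipz a (Function.update v t₀ (!(v t₀))) = ipz a v + 1 := by
  unfold ipz
  rw [← Finset.sum_erase_add _ _ (Finset.mem_univ t₀),
    ← Finset.sum_erase_add _ _ (Finset.mem_univ t₀)]
  have he : ∑ t ∈ Finset.univ.erase t₀,
      (if a t && Function.update v t₀ (!(v t₀)) t then (1 : ZMod 2) else 0)
      = ∑ t ∈ Finset.univ.erase t₀, (if a t && v t then (1 : ZMod 2) else 0) := by
    apply Finset.sum_congr rfl
    intro t ht
    rw [Function.update_of_ne (Finset.ne_of_mem_erase ht)]
  rw [he, Function.update_self, h, add_assoc]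
  congr 1
  cases v t₀ <;> decide

lemma sgn_update (a v : Fin k → Bool) (t₀ : Fin k) (h : a t₀ = true) :
    sgn a (Function.update v t₀ (!(v t₀))) = - sgn a v := by
  unfold sgn ipb mu
  rcases zmod2_cases (ipz a v) with h0 | h0 <;> simp [ipz_update a v t₀ h, h0]

lemma sgn_sum (a : Fin k → Bool) :
    ∑ v : Fin k → Bool, sgn a v = if a = (fun _ => false) then (2:ℝ)^k else 0 := by
  by_cases ha : a = (fun _ => false)
  · subst ha
    rw [if_pos rfl]
    have : ∀ v : Fin k → Bool, sgn (fun _ => false) v = 1 := by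
      intro v
      have h0 : ipz (fun _ => false) v = 0 := by unfold ipz; simp
      simp [sgn, ipb, h0, mu]
    simp only [this, Finset.sum_const, nsmul_eq_mul, mul_one]
    simp [Fintype.card_fun]
  · rw [if_neg ha]
    obtain ⟨t₀, ht₀⟩ : ∃ t₀, a t₀ = true := by
      by_contra hc
      push_neg at hc
      exact ha (funext fun t => by simpa using hc t)
    apply Finset.sum_ninvolution (fun v => Function.update v t₀ (!(v t₀)))
    · intro v; rw [sgn_update a v t₀ ht₀]; ring
    · intro v _
      intro hc
      have := congrFun hc t₀
      rw [Function.update_self] at this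
      exact Bool.not_ne_self _ this
    · intro v; exact Finset.mem_univ _
    · intro v
      funext t
      by_cases ht : t = t₀
      · subst ht; simp
      · rw [Function.update_of_ne ht, Function.update_of_ne ht]

end Stmt4

namespace Stmt4

lemma ipb_comm (a v : Fin k → Bool) : ipb a v = ipb v a := by
  unfold ipb; rw [ipz_comm]

lemma sgn_comm (a v : Fin k → Bool) : sgn a v = sgn v a := by
  unfold sgn; rw [ipb_comm]

lemma ipb_delta (a : Fin k → Bool) (t : Fin k) :
    ipb a (fun s => decide (s = t)) = a t := by
  cases h : a t <;> simp [ipb, ipz_delta, h]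

lemma mu_not (b : Bool) : mu (!b) = - mu b := by cases b <;> simp [mu]

/-- the bit string corresponding to row `a` (complemented if `c`) -/
def str (e : Fin (2^k) ≃ (Fin k → Bool)) (a : Fin k → Bool) (c : Bool) :
    Fin (2^k) → Bool := fun j => xor c (ipb a (e j))

lemma str_inj (e : Fin (2^k) ≃ (Fin k → Bool)) :
    Function.Injective (fun ac : (Fin k → Bool) × Bool => str e ac.1 ac.2) := by
  intro ⟨a, c⟩ ⟨a', c'⟩ h
  simp only at h
  have hv : ∀ v : Fin k → Bool, xor c (ipb a v) = xor c' (ipb a' v) := by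
    intro v
    have := congrFun h (e.symm v)
    simpa [str, e.apply_symm_apply] using this
  have hc : c = c' := by
    have := hv (fun _ => false)
    simpa [ipb_zero] using this
  subst hc
  have ha : a = a' := by
    funext t
    have := hv (fun s => decide (s = t))
    rw [ipb_delta, ipb_delta] at this
    cases c <;> simpa using this
  simp [ha]

lemma mu_sum {α : Type*} [Fintype α] [DecidableEq α] (i : α) :
    ∑ x : α → Bool, mu (x i) = 0 := by
  apply Finset.sum_ninvolution (fun x => Function.update x i (!(x i)))
  · intro x; rw [Function.update_self, mu_not]; ring
  · intro x _ hc
    have := congrFun hc i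
    rw [Function.update_self] at this
    exact Bool.not_ne_self _ this
  · intro x; exact Finset.mem_univ _
  · intro x
    funext t
    by_cases ht : t = i
    · subst ht; simp
    · rw [Function.update_of_ne ht, Function.update_of_ne ht]

lemma mu_sum2 {α : Type*} [Fintype α] [DecidableEq α] {i j : α} (hij : i ≠ j) :
    ∑ x : α → Bool, mu (x i) * mu (x j) = 0 := by
  apply Finset.sum_ninvolution (fun x => Function.update x i (!(x i)))
  · intro x
    rw [Function.update_self, Function.update_of_ne (Ne.symm hij), mu_not]; ring
  · intro x _ hc
    have := congrFun hc i
    rw [Function.update_self] at this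
    exact Bool.not_ne_self _ this
  · intro x; exact Finset.mem_univ _
  · intro x
    funext t
    by_cases ht : t = i
    · subst ht; simp
    · rw [Function.update_of_ne ht, Function.update_of_ne ht]

end Stmt4

namespace Stmt4

def rows (e : Fin (2^k) ≃ (Fin k → Bool)) : Finset (Fin (2^k) → Bool) :=
  Finset.image (fun ac : (Fin k → Bool) × Bool => str e ac.1 ac.2) Finset.univ

lemma card_rows (e : Fin (2^k) ≃ (Fin k → Bool)) : (rows e).card = 2 * 2^k := by
  rw [rows, Finset.card_image_of_injective _ (str_inj e)]
  simp [Fintype.card_prod, mul_comm]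

lemma sum_rows (e : Fin (2^k) ≃ (Fin k → Bool)) (w : ℝ)
    (f : (Fin (2^k) → Bool) → ℝ) :
    ∑ x : Fin (2^k) → Bool, (if x ∈ rows e then w else 0) * f x
      = ∑ a : Fin k → Bool, ∑ c : Bool, w * f (str e a c) := by
  have h1 : ∀ x, (if x ∈ rows e then w else 0) * f x
      = if x ∈ rows e then w * f x else 0 := by
    intro x; split <;> simp
  simp only [h1]
  rw [Finset.sum_ite_mem, Finset.univ_inter, rows,
    Finset.sum_image (fun a _ b _ h => str_inj e h), Fintype.sum_prod_type]

end Stmt4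


/-- There exist two probability distributions on bit strings of length `n = 2^k`
(for any `k ≥ 2`) whose first and second `±1`-moments (hence covariance
matrices) coincide, yet whose total variation distance equals
`1 − n·2^{1−n}` (written here as `1 − 2n/2^n`). -/
theorem stmt4 :
    ∀ k : ℕ, 2 ≤ k →
    ∃ (p q : (Fin (2 ^ k) → Bool) → ℝ),
      (∀ x, 0 ≤ p x) ∧ (∀ x, 0 ≤ q x) ∧
      (∑ x, p x) = 1 ∧ (∑ x, q x) = 1 ∧
      -- first moments coincide
      (∀ i, (∑ x, p x * (if x i then (1 : ℝ) else -1)) =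
            (∑ x, q x * (if x i then (1 : ℝ) else -1))) ∧
      -- second moments coincide
      (∀ i j, (∑ x, p x * ((if x i then (1 : ℝ) else -1) * (if x j then (1 : ℝ) else -1))) =
              (∑ x, q x * ((if x i then (1 : ℝ) else -1) * (if x j then (1 : ℝ) else -1)))) ∧
      -- yet the total variation distance is 1 − n·2^{1−n}
      ((1 / 2 : ℝ) * ∑ x, |p x - q x|) =
        1 - ((2 ^ k : ℝ) * 2) / (2 : ℝ) ^ (2 ^ k) := by

  intro k hk
  classical
  set n : ℕ := 2 ^ k with hn
  have ecard : Fintype.card (Fin k → Bool) = 2 ^ k := by simp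
  let e : Fin (2 ^ k) ≃ (Fin k → Bool) :=
    (Fintype.equivFinOfCardEq ecard).symm
  set w : ℝ := 1 / (2 * (2:ℝ)^k) with hw
  set q0 : ℝ := 1 / (2:ℝ)^(2^k) with hq0
  have h2k : (0:ℝ) < (2:ℝ)^k := by positivity
  have hN : (0:ℝ) < (2:ℝ)^(2^k) := by positivity
  have hwpos : 0 < w := by rw [hw]; positivity
  have hq0pos : 0 < q0 := by rw [hq0]; positivity
  have hMN : (2 : ℕ) * 2^k ≤ 2^(2^k) := by
    calc (2:ℕ) * 2^k = 2^(k+1) := by ring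
    _ ≤ 2^(2^k) := Nat.pow_le_pow_right (by norm_num) (Nat.lt_two_pow_self (n := k))
  have hMNR : (2:ℝ) * (2:ℝ)^k ≤ (2:ℝ)^(2^k) := by
    have := (Nat.cast_le (α := ℝ)).2 hMN
    push_cast at this
    convert this using 2 <;> norm_num
  have hq0w : q0 ≤ w := by
    rw [hq0, hw]
    apply one_div_le_one_div_of_le (by positivity) hMNR
  set p : (Fin (2^k) → Bool) → ℝ := fun x => if x ∈ Stmt4.rows e then w else 0 with hp
  set q : (Fin (2^k) → Bool) → ℝ := fun _ => q0 with hqd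
  have cardX : Fintype.card (Fin (2^k) → Bool) = 2^(2^k) := by simp
  -- total masses
  have hp1 : (∑ x, p x) = 1 := by
    have h := Stmt4.sum_rows e w (fun _ => (1:ℝ))
    simp only [mul_one] at h
    rw [hp]
    rw [h]
    simp only [Finset.sum_const, Finset.card_univ, nsmul_eq_mul]
    rw [ecard]
    simp only [Fintype.card_bool]
    push_cast
    rw [hw]
    field_simp
  have hq1 : (∑ x, q x) = 1 := by
    rw [hqd]
    simp only [Finset.sum_const, Finset.card_univ, nsmul_eq_mul, cardX]
    rw [hq0]
    push_cast
    field_simp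
  -- q-side moment sums
  have hqm1 : ∀ i : Fin (2^k),
      (∑ x : Fin (2^k) → Bool, q x * (if x i then (1 : ℝ) else -1)) = 0 := by
    intro i
    simp only [hqd, Stmt4.stmt_sign, mul_neg]
    rw [Finset.sum_neg_distrib, ← Finset.mul_sum, Stmt4.mu_sum i, mul_zero, neg_zero]
  have hqm2 : ∀ i j : Fin (2^k), i ≠ j →
      (∑ x : Fin (2^k) → Bool, q x *
        ((if x i then (1 : ℝ) else -1) * (if x j then (1 : ℝ) else -1))) = 0 := by
    intro i j hij
    simp only [hqd, Stmt4.stmt_sign, neg_mul_neg, ← Finset.mul_sum]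
    rw [Stmt4.mu_sum2 hij, mul_zero]
  -- p-side first moment
  have hpm1 : ∀ i : Fin (2^k),
      (∑ x : Fin (2^k) → Bool, p x * (if x i then (1 : ℝ) else -1)) = 0 := by
    intro i
    rw [hp]
    rw [Stmt4.sum_rows e w (fun x => if x i then (1:ℝ) else -1)]
    apply Finset.sum_eq_zero
    intro a _
    rw [Fintype.sum_bool]
    simp only [Stmt4.str]
    have hb : ∀ (d : Bool),
        ((w * if (true ^^ d) = true then (1:ℝ) else -1) +
          w * if (false ^^ d) = true then (1:ℝ) else -1) = 0 := by
      intro d; cases d <;> simp <;> ring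
    exact hb _
  -- p-side second moment (off-diagonal)
  have hpm2 : ∀ i j : Fin (2^k), i ≠ j →
      (∑ x : Fin (2^k) → Bool, p x *
        ((if x i then (1 : ℝ) else -1) * (if x j then (1 : ℝ) else -1))) = 0 := by
    intro i j hij
    set u : Fin k → Bool := fun t => xor (e i t) (e j t) with hu
    have hune : u ≠ (fun _ => false) := by
      intro hc
      apply hij
      apply e.injective
      funext t
      have h2 := congrFun hc t
      simp only [hu] at h2
      revert h2
      cases (e i t) <;> cases (e j t) <;> simp
    have key : ∀ (a : Fin k → Bool) (c : Bool),
        ((if Stmt4.str e a c i then (1:ℝ) else -1) *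
          (if Stmt4.str e a c j then (1:ℝ) else -1)) = Stmt4.sgn u a := by
      intro a c
      simp only [Stmt4.stmt_sign]; simp only [Stmt4.str, Stmt4.mu_xor]
      have hr : -(Stmt4.mu c * Stmt4.mu (Stmt4.ipb a (e i))) *
          -(Stmt4.mu c * Stmt4.mu (Stmt4.ipb a (e j)))
          = (Stmt4.mu c * Stmt4.mu c) *
            (Stmt4.mu (Stmt4.ipb a (e i)) * Stmt4.mu (Stmt4.ipb a (e j))) := by ring
      rw [hr, Stmt4.mu_sq, one_mul]
      show Stmt4.sgn a (e i) * Stmt4.sgn a (e j) = Stmt4.sgn u a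
      rw [Stmt4.sgn_comm a (e i), Stmt4.sgn_comm a (e j), Stmt4.sgn_mul]
    rw [hp]
    rw [Stmt4.sum_rows e w
      (fun x => (if x i then (1:ℝ) else -1) * (if x j then (1:ℝ) else -1))]
    have : ∀ a : Fin k → Bool,
        (∑ c : Bool, w * ((if Stmt4.str e a c i then (1:ℝ) else -1) *
          (if Stmt4.str e a c j then (1:ℝ) else -1))) = 2 * w * Stmt4.sgn u a := by
      intro a
      rw [Fintype.sum_bool, key a true, key a false]
      ring
    simp only [this]
    rw [← Finset.mul_sum, Stmt4.sgn_sum u, if_neg hune, mul_zero]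
  refine ⟨p, q, ?_, ?_, hp1, hq1, ?_, ?_, ?_⟩
  · intro x; rw [hp]; dsimp only; split
    · exact le_of_lt hwpos
    · exact le_refl 0
  · intro x; exact le_of_lt hq0pos
  · intro i
    rw [hpm1 i, hqm1 i]
  · intro i j
    by_cases hij : i = j
    · subst hij
      have hone : ∀ (y : Fin (2^k) → Bool),
          ((if y i then (1:ℝ) else -1) * (if y i then (1:ℝ) else -1)) = 1 := by
        intro y; cases h : y i <;> simp [h]
      simp only [hone, mul_one]
      rw [hp1, hq1]
    · rw [hpm2 i j hij, hqm2 i j hij]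
  · -- total variation
    set T := Stmt4.rows e with hT
    have hsub : T ⊆ Finset.univ := Finset.subset_univ T
    have hsplit : (∑ x : Fin (2^k) → Bool, |p x - q x|)
        = (∑ x ∈ Finset.univ \ T, |p x - q x|) + ∑ x ∈ T, |p x - q x| :=
      (Finset.sum_sdiff hsub).symm
    have honT : ∀ x ∈ T, |p x - q x| = w - q0 := by
      intro x hx
      rw [hp, hqd]
      dsimp only
      rw [if_pos hx, abs_of_nonneg (by linarith)]
    have hoffT : ∀ x ∈ Finset.univ \ T, |p x - q x| = q0 := by
      intro x hx
      rw [Finset.mem_sdiff] at hx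
      rw [hp, hqd]
      dsimp only
      rw [if_neg hx.2, zero_sub, abs_neg, abs_of_nonneg (le_of_lt hq0pos)]
    rw [hsplit, Finset.sum_congr rfl honT, Finset.sum_congr rfl hoffT,
      Finset.sum_const, Finset.sum_const, nsmul_eq_mul, nsmul_eq_mul]
    have hcardT : (T.card : ℝ) = 2 * (2:ℝ)^k := by
      rw [hT, Stmt4.card_rows e]; push_cast; ring
    have hcardTc : ((Finset.univ \ T).card : ℝ) = (2:ℝ)^(2^k) - 2 * (2:ℝ)^k := by
      rw [Finset.card_sdiff_of_subset hsub, Finset.card_univ, cardX]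
      rw [hT, Stmt4.card_rows e]
      rw [Nat.cast_sub hMN]
      push_cast; ring
    rw [hcardT, hcardTc, hw, hq0]
    have hn' : (n : ℕ) = 2^k := hn
    rw [hn']
    field_simp
    ring
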